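/- Let A be a K-algebra, G a finite group acting on A, P a finitely generated projective A ∗ G-module, N an A ∗ G-module, and W a KG-module. Then there is a K-vector space isomorphism Hom_A(P, N) ⊗_K W ≅ Hom_{A∗G}(P ⊗_K KG, N ⊗_K W), given by φ ⊗ w ↦ (p ⊗ g ↦ (g·φ)(p) ⊗ gw). -/

import Mathlib

open CategoryTheory

universe u

/-- `B` is a skew group algebra `A ∗ G` for the action `φ` of `G` on the `K`-algebra `A`:
`B` contains `A` and invertible elements indexed by `G` satisfying the skew commutation
rule `g · a = (g a) · g`, and `B` is free as an `A`-module with basis `G`. -/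
structure IsSkewGroupAlgebra (K : Type u) [Field K] (A : Type u) [Ring A] [Algebra K A]
    (G : Type u) [Group G] [Fintype G] (φ : G →* (A ≃ₐ[K] A))
    (B : Type u) [Ring B] [Algebra K B] where
  ιA : A →ₐ[K] B
  ιG : G →* B
  comm : ∀ (g : G) (a : A), ιG g * ιA a = ιA (φ g a) * ιG g
  free : ∀ b : B, ∃! c : G → A, b = ∑ g : G, ιA (c g) * ιG g

open TensorProduct

theorem aux_bij (K : Type u) [Field K] (A : Type u) [Ring A]
    (P : Type u) [AddCommGroup P] [Module A P] [Module.Finite A P]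
    (N : Type u) [AddCommGroup N] [Module A N] [Module K N]
    [SMulCommClass A K N] [SMulCommClass K A N]
    (W : Type u) [AddCommGroup W] [Module K W] :
    ∃ e : ((P →ₗ[A] N) ⊗[K] W) ≃ₗ[K] (P →ₗ[A] (N ⊗[K] W)),
      ∀ (f : P →ₗ[A] N) (w : W) (p : P), e (f ⊗ₜ[K] w) p = f p ⊗ₜ[K] w := by
  classical
  let tw : W → (N →ₗ[A] N ⊗[K] W) := fun w =>
    { toFun := fun n => n ⊗ₜ[K] w
      map_add' := fun n n' => add_tmul n n' w
      map_smul' := fun a n => (smul_tmul' a n w).symm }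
  let Φbil : (P →ₗ[A] N) →ₗ[K] W →ₗ[K] (P →ₗ[A] (N ⊗[K] W)) :=
    LinearMap.mk₂' K K (fun f w => (tw w).comp f)
      (fun f f' w => by ext p; simp [tw, add_tmul])
      (fun k f w => by ext p; simp [tw, smul_tmul'])
      (fun f w w' => by ext p; simp [tw, tmul_add])
      (fun k f w => by ext p; simp [tw, tmul_smul])
  let Φ : ((P →ₗ[A] N) ⊗[K] W) →ₗ[K] (P →ₗ[A] (N ⊗[K] W)) := TensorProduct.lift Φbil
  have hΦ : ∀ (f : P →ₗ[A] N) (w : W) (p : P), Φ (f ⊗ₜ[K] w) p = f p ⊗ₜ[K] w := by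
    intro f w p
    simp [Φ, Φbil, tw]
  let ι := Module.Basis.ofVectorSpaceIndex K W
  let bW : Module.Basis ι K W := Module.Basis.ofVectorSpace K W
  let eqN : (N ⊗[K] W) ≃ₗ[K] (ι →₀ N) :=
    (TensorProduct.congr (LinearEquiv.refl K N) bW.repr).trans (finsuppScalarRight K K N ι)
  let eqH : ((P →ₗ[A] N) ⊗[K] W) ≃ₗ[K] (ι →₀ (P →ₗ[A] N)) :=
    (TensorProduct.congr (LinearEquiv.refl K (P →ₗ[A] N)) bW.repr).trans
      (finsuppScalarRight K K (P →ₗ[A] N) ι)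
  have heqN : ∀ (n : N) (w : W) (i : ι), eqN (n ⊗ₜ[K] w) i = bW.repr w i • n := by
    intro n w i; simp [eqN]
  have heqH : ∀ (f : P →ₗ[A] N) (w : W) (i : ι), eqH (f ⊗ₜ[K] w) i = bW.repr w i • f := by
    intro f w i; simp [eqH]
  have hsingle : ∀ (n : N) (i : ι), eqN (n ⊗ₜ[K] bW i) = Finsupp.single i n := by
    intro n i
    ext j
    rw [heqN]
    simp [Finsupp.single_apply, ite_smul, eq_comm]
  have hco : ∀ (x : (P →ₗ[A] N) ⊗[K] W) (p : P) (i : ι),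
      eqN (Φ x p) i = eqH x i p := by
    intro x p i
    induction x using TensorProduct.induction_on with
    | zero => simp
    | tmul f w => rw [hΦ, heqN, heqH, LinearMap.smul_apply]
    | add x y hx hy =>
        rw [map_add, map_add, LinearMap.add_apply, map_add, Finsupp.add_apply,
          Finsupp.add_apply, LinearMap.add_apply, hx, hy]
  have hsmulN : ∀ (a : A) (y : N ⊗[K] W) (i : ι), eqN (a • y) i = a • eqN y i := by
    intro a y i
    induction y using TensorProduct.induction_on with
    | zero => simp
    | tmul n w => rw [smul_tmul', heqN, heqN, smul_comm]
    | add y z hy hz =>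
        rw [smul_add, map_add, map_add, Finsupp.add_apply, Finsupp.add_apply, hy, hz, smul_add]
  have hinj : Function.Injective Φ := by
    intro x y hxy
    apply eqH.injective
    refine Finsupp.ext fun i => LinearMap.ext fun p => ?_
    rw [← hco, ← hco, hxy]
  have hsurj : Function.Surjective Φ := by
    intro F
    obtain ⟨s, hs⟩ := Module.Finite.fg_top (R := A) (M := P)
    set S : Finset ι := s.sup (fun q => (eqN (F q)).support) with hSdef
    let fc : ι → (P →ₗ[A] N) := fun i =>
      { toFun := fun p => eqN (F p) i
        map_add' := fun p q => by
          show eqN (F (p + q)) i = eqN (F p) i + eqN (F q) i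
          rw [map_add, map_add, Finsupp.add_apply]
        map_smul' := fun a p => by
          show eqN (F (a • p)) i = a • eqN (F p) i
          rw [map_smul, hsmulN] }
    have hker : ∀ i ∉ S, ∀ p, fc i p = 0 := by
      intro i hi p
      have hp : p ∈ Submodule.span A (s : Set P) := by rw [hs]; trivial
      refine Submodule.span_induction ?_ ?_ ?_ ?_ hp
      · intro q hq
        have hsub : (eqN (F q)).support ⊆ S := Finset.le_sup (f := fun q => (eqN (F q)).support) hq
        have : i ∉ (eqN (F q)).support := fun h => hi (hsub h)
        simpa [fc] using Finsupp.notMem_support_iff.mp this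
      · simp
      · intro x y _ _ hx hy; rw [map_add, hx, hy, add_zero]
      · intro a x _ hx; rw [map_smul, hx, smul_zero]
    refine ⟨∑ i ∈ S, (fc i) ⊗ₜ[K] (bW i), ?_⟩
    apply LinearMap.ext; intro p
    apply eqN.injective
    rw [map_sum, LinearMap.sum_apply, map_sum]
    refine Finsupp.ext fun j => ?_
    rw [Finsupp.finset_sum_apply]
    have : ∀ i ∈ S, eqN (Φ (fc i ⊗ₜ[K] bW i) p) j = if j = i then fc i p else 0 := by
      intro i _
      rw [hΦ, hsingle, Finsupp.single_apply, eq_comm]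
      simp [eq_comm]
    rw [Finset.sum_congr rfl this, Finset.sum_ite_eq S j (fun i => fc i p)]
    by_cases hj : j ∈ S
    · simp only [hj, if_true]; rfl
    · simp only [hj, if_false]
      exact (hker j hj p).symm
  exact ⟨LinearEquiv.ofBijective Φ ⟨hinj, hsurj⟩, hΦ⟩

theorem stmt10 (K : Type u) [Field K] (A : Type u) [Ring A] [Algebra K A]
    (G : Type u) [Group G] [Fintype G] (φ : G →* (A ≃ₐ[K] A))
    (B : Type u) [Ring B] [Algebra K B]
    (H : IsSkewGroupAlgebra K A G φ B)
    -- P : a finitely generated projective A ∗ G-module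
    (P : Type u) [AddCommGroup P] [Module B P] [Module A P] [Module K P]
    (hPA : ∀ (a : A) (p : P), H.ιA a • p = a • p)
    (hPK : ∀ (k : K) (p : P), algebraMap K B k • p = k • p)
    [Module.Finite B P] (hproj : Module.Projective B P)
    -- N : an A ∗ G-module
    (N : Type u) [AddCommGroup N] [Module B N] [Module A N] [Module K N]
    [SMulCommClass A K N]
    (hNA : ∀ (a : A) (n : N), H.ιA a • n = a • n)
    (hNK : ∀ (k : K) (n : N), algebraMap K B k • n = k • n)
    -- W : a KG-module
    (W : Type u) [AddCommGroup W] [Module K W] (ψ : G →* (W ≃ₗ[K] W))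
    -- the twisted A ∗ G-module structure on P ⊗_K KG : (ag)(p ⊗ h) = a(gp) ⊗ gh
    [Module B (P ⊗[K] MonoidAlgebra K G)]
    (hPKG : ∀ (a : A) (g : G) (p : P) (h : G),
      (H.ιA a * H.ιG g) • (p ⊗ₜ[K] MonoidAlgebra.of K G h) =
        ((H.ιA a * H.ιG g) • p) ⊗ₜ[K] MonoidAlgebra.of K G (g * h))
    -- the twisted A ∗ G-module structure on N ⊗_K W : (ag)(n ⊗ w) = a(gn) ⊗ gw
    [Module B (N ⊗[K] W)] [SMulCommClass B K (N ⊗[K] W)]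
    (hNW : ∀ (a : A) (g : G) (n : N) (w : W),
      (H.ιA a * H.ιG g) • (n ⊗ₜ[K] w) = ((H.ιA a * H.ιG g) • n) ⊗ₜ[K] (ψ g w)) :
    ∃ Θ : ((P →ₗ[A] N) ⊗[K] W) ≃ₗ[K] ((P ⊗[K] MonoidAlgebra K G) →ₗ[B] (N ⊗[K] W)),
      ∀ (f : P →ₗ[A] N) (w : W) (p : P) (g : G),
        Θ (f ⊗ₜ[K] w) (p ⊗ₜ[K] MonoidAlgebra.of K G g) =
          (H.ιG g • f (H.ιG g⁻¹ • p)) ⊗ₜ[K] (ψ g w) := by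
  classical
  haveI : SMulCommClass K A N := SMulCommClass.symm A K N
  set dd : G → MonoidAlgebra K G := fun g => MonoidAlgebra.of K G g with hdd
  have hι1 : H.ιG (1 : G) = 1 := map_one H.ιG
  have hAK : ∀ (k : K), H.ιA (algebraMap K A k) = algebraMap K B k := fun k => H.ιA.commutes k
  have hPKA : ∀ (k : K) (p : P), (algebraMap K A k) • p = k • p := by
    intro k p; rw [← hPA, hAK, hPK]
  have hNKA : ∀ (k : K) (n : N), (algebraMap K A k) • n = k • n := by
    intro k n; rw [← hNA, hAK, hNK]
  have hBKP : ∀ (b : B) (k : K) (p : P), b • (k • p) = k • (b • p) := by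
    intro b k p
    rw [← hPK, ← mul_smul, ← Algebra.commutes k b, mul_smul, hPK]
  have hBKN : ∀ (b : B) (k : K) (n : N), b • (k • n) = k • (b • n) := by
    intro b k n
    rw [← hNK, ← mul_smul, ← Algebra.commutes k b, mul_smul, hNK]
  -- action of group / algebra elements alone on the twisted tensor products
  have hg1 : ∀ (g : G) (p : P) (h : G),
      H.ιG g • (p ⊗ₜ[K] dd h) = (H.ιG g • p) ⊗ₜ[K] dd (g * h) := by
    intro g p h
    have := hPKG 1 g p h
    simpa [hdd] using this
  have hA1 : ∀ (a : A) (p : P) (h : G),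
      H.ιA a • (p ⊗ₜ[K] dd h) = (H.ιA a • p) ⊗ₜ[K] dd h := by
    intro a p h
    have := hPKG a 1 p h
    simpa [hdd] using this
  have hgNW : ∀ (g : G) (n : N) (w : W),
      H.ιG g • (n ⊗ₜ[K] w) = (H.ιG g • n) ⊗ₜ[K] ψ g w := by
    intro g n w
    have := hNW 1 g n w
    simpa using this
  have hANW : ∀ (a : A) (n : N) (w : W),
      H.ιA a • (n ⊗ₜ[K] w) = (H.ιA a • n) ⊗ₜ[K] w := by
    intro a n w
    have := hNW a 1 n w
    simpa using this
  -- extensionality for B-linear maps on P ⊗ KG from values at p ⊗ δ_1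
  have hext1 : ∀ (F₁ F₂ : (P ⊗[K] MonoidAlgebra K G) →ₗ[B] (N ⊗[K] W)),
      (∀ p : P, F₁ (p ⊗ₜ[K] dd 1) = F₂ (p ⊗ₜ[K] dd 1)) → F₁ = F₂ := by
    intro F₁ F₂ h1
    have hg : ∀ (p : P) (g : G), F₁ (p ⊗ₜ[K] dd g) = F₂ (p ⊗ₜ[K] dd g) := by
      intro p g
      have hrw : p ⊗ₜ[K] dd g = H.ιG g • ((H.ιG g⁻¹ • p) ⊗ₜ[K] dd 1) := by
        rw [hg1, ← mul_smul, ← map_mul, mul_inv_cancel, hι1, one_smul, mul_one]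
      rw [hrw, map_smul, map_smul, h1]
    apply LinearMap.ext
    intro x
    induction x using TensorProduct.induction_on with
    | zero => simp
    | tmul p y =>
        induction y using MonoidAlgebra.induction_on generalizing p with
        | of g => exact hg p g
        | add y z hy hz => rw [tmul_add, map_add, map_add, hy, hz]
        | smul k y hy =>
            rw [← smul_tmul]
            exact hy (k • p)
    | add x y hx hy => rw [map_add, map_add, hx, hy]
  -- P is finitely generated over A
  haveI hfinA : Module.Finite A P := by
    obtain ⟨s, hs⟩ := Module.Finite.fg_top (R := B) (M := P)
    let T : Finset P := Finset.image₂ (fun (g : G) (q : P) => H.ιG g • q) Finset.univ s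
    have hstab : ∀ x ∈ Submodule.span A (T : Set P), ∀ b : B,
        b • x ∈ Submodule.span A (T : Set P) := by
      intro x hx
      induction hx using Submodule.span_induction with
      | mem t ht =>
          intro b
          obtain ⟨g, -, q, hq, rfl⟩ := Finset.mem_image₂.mp ht
          obtain ⟨c, hc, -⟩ := H.free (b * H.ιG g)
          rw [← mul_smul, hc, Finset.sum_smul]
          refine Submodule.sum_mem _ fun h _ => ?_
          rw [mul_smul, hPA]
          exact Submodule.smul_mem _ _ (Submodule.subset_span
            (Finset.mem_coe.mpr (Finset.mem_image₂_of_mem (Finset.mem_univ h) hq)))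
      | zero => intro b; rw [smul_zero]; exact Submodule.zero_mem _
      | add x y _ _ hx hy => intro b; rw [smul_add]; exact Submodule.add_mem _ (hx b) (hy b)
      | smul a x _ hx =>
          intro b
          rw [← hPA, ← mul_smul]
          exact hx (b * H.ιA a)
    have hT : Submodule.span A (T : Set P) = ⊤ := by
      rw [eq_top_iff]
      rintro p -
      have hp : p ∈ Submodule.span B (s : Set P) := by rw [hs]; trivial
      induction hp using Submodule.span_induction with
      | mem q hq =>
          have h1 : q = H.ιG 1 • q := by rw [hι1, one_smul]
          rw [h1]
          exact Submodule.subset_span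
            (Finset.mem_coe.mpr (Finset.mem_image₂_of_mem (Finset.mem_univ 1) hq))
      | zero => exact Submodule.zero_mem _
      | add x y _ _ hx hy => exact Submodule.add_mem _ hx hy
      | smul b x hx ih => exact hstab x ih b
    exact ⟨⟨T, hT⟩⟩
  obtain ⟨e, he⟩ := aux_bij K A P N W
  -- relating the B-action on N ⊗ W restricted to A with the canonical A-action
  have hANW' : ∀ (a : A) (y : N ⊗[K] W), H.ιA a • y = a • y := by
    intro a y
    induction y using TensorProduct.induction_on with
    | zero => simp
    | tmul n w => rw [hANW, hNA, smul_tmul']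
    | add x y hx hy => rw [smul_add, smul_add, hx, hy]
  -- key computation
  have hkey : ∀ (f : P →ₗ[A] N) (a : A) (h g : G) (q : P),
      H.ιG (h * g) • f (H.ιG (h * g)⁻¹ • ((H.ιA a * H.ιG h) • q)) =
      (H.ιA a * H.ιG h) • (H.ιG g • f (H.ιG g⁻¹ • q)) := by
    intro f a h g q
    have h1 : H.ιG (h * g)⁻¹ • ((H.ιA a * H.ιG h) • q)
        = (φ (h * g)⁻¹ a) • (H.ιG g⁻¹ • q) := by
      rw [← mul_smul, ← mul_assoc, H.comm, mul_assoc, ← map_mul]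
      have : (h * g)⁻¹ * h = g⁻¹ := by group
      rw [this, mul_smul, hPA]
    calc H.ιG (h * g) • f (H.ιG (h * g)⁻¹ • ((H.ιA a * H.ιG h) • q))
        = H.ιG (h * g) • f ((φ (h * g)⁻¹ a) • (H.ιG g⁻¹ • q)) := by rw [h1]
      _ = H.ιG (h * g) • (H.ιA (φ (h * g)⁻¹ a) • f (H.ιG g⁻¹ • q)) := by
          rw [map_smul, hNA]
      _ = (H.ιG (h * g) * H.ιA (φ (h * g)⁻¹ a)) • f (H.ιG g⁻¹ • q) := by rw [mul_smul]
      _ = (H.ιA (φ (h * g) (φ (h * g)⁻¹ a)) * H.ιG (h * g)) • f (H.ιG g⁻¹ • q) := by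
          rw [H.comm]
      _ = (H.ιA a * H.ιG (h * g)) • f (H.ιG g⁻¹ • q) := by
          rw [← AlgEquiv.mul_apply, ← map_mul, mul_inv_cancel, map_one, AlgEquiv.one_apply]
      _ = (H.ιA a * H.ιG h) • (H.ιG g • f (H.ιG g⁻¹ • q)) := by
          rw [map_mul, ← mul_assoc, mul_smul]
  -- construction of the map
  let tees : (P →ₗ[A] N) → W → G → (P →ₗ[K] (N ⊗[K] W)) := fun f w g =>
    { toFun := fun p => (H.ιG g • f (H.ιG g⁻¹ • p)) ⊗ₜ[K] ψ g w
      map_add' := fun p q => by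
        show (H.ιG g • f (H.ιG g⁻¹ • (p + q))) ⊗ₜ[K] ψ g w
          = (H.ιG g • f (H.ιG g⁻¹ • p)) ⊗ₜ[K] ψ g w + (H.ιG g • f (H.ιG g⁻¹ • q)) ⊗ₜ[K] ψ g w
        rw [smul_add, map_add, smul_add, add_tmul]
      map_smul' := fun k p => by
        show (H.ιG g • f (H.ιG g⁻¹ • k • p)) ⊗ₜ[K] ψ g w
          = k • ((H.ιG g • f (H.ιG g⁻¹ • p)) ⊗ₜ[K] ψ g w)
        rw [hBKP, ← hPKA, map_smul, hNKA, hBKN, smul_tmul'] }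
  let lkg : (P →ₗ[A] N) → W → ((G →₀ K) →ₗ[K] (P →ₗ[K] (N ⊗[K] W))) := fun f w =>
    Finsupp.lsum K (fun g => LinearMap.toSpanSingleton K _ (tees f w g))
  let L0 : (P →ₗ[A] N) → W → ((P ⊗[K] MonoidAlgebra K G) →ₗ[K] (N ⊗[K] W)) := fun f w =>
    TensorProduct.lift (LinearMap.flip ((lkg f w) ∘ₗ (MonoidAlgebra.coeffLinearEquiv K).toLinearMap))
  have hL0 : ∀ (f : P →ₗ[A] N) (w : W) (p : P) (g : G),
      L0 f w (p ⊗ₜ[K] dd g) = (H.ιG g • f (H.ιG g⁻¹ • p)) ⊗ₜ[K] ψ g w := by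
    intro f w p g
    show TensorProduct.lift (LinearMap.flip ((lkg f w) ∘ₗ (MonoidAlgebra.coeffLinearEquiv K).toLinearMap)) (p ⊗ₜ[K] MonoidAlgebra.single g 1) = _
    rw [TensorProduct.lift.tmul, LinearMap.flip_apply]
    show (lkg f w) (Finsupp.single g 1) p = _
    simp [lkg, tees]
  have hB0 : ∀ (f : P →ₗ[A] N) (w : W) (b : B) (x : P ⊗[K] MonoidAlgebra K G),
      L0 f w (b • x) = b • L0 f w x := by
    intro f w b x
    induction x using TensorProduct.induction_on with
    | zero => rw [smul_zero, map_zero, smul_zero]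
    | add x y hx hy => rw [smul_add, map_add, map_add, hx, hy, smul_add]
    | tmul p y =>
        induction y using MonoidAlgebra.induction_on generalizing p with
        | of g =>
            obtain ⟨c, hc, -⟩ := H.free b
            rw [hc, Finset.sum_smul, Finset.sum_smul, map_sum]
            refine Finset.sum_congr rfl fun h _ => ?_
            rw [hPKG, hL0, hL0, hNW, hkey]
            congr 1
            rw [map_mul]
            rfl
        | add y z hy hz =>
            rw [tmul_add, smul_add, map_add, map_add, hy, hz, smul_add]
        | smul k y hy =>
            rw [← smul_tmul]
            exact hy (k • p)
  let LB : (P →ₗ[A] N) → W → ((P ⊗[K] MonoidAlgebra K G) →ₗ[B] (N ⊗[K] W)) := fun f w =>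
    { toFun := L0 f w
      map_add' := (L0 f w).map_add
      map_smul' := fun b x => hB0 f w b x }
  have hLB : ∀ (f : P →ₗ[A] N) (w : W) (p : P) (g : G),
      LB f w (p ⊗ₜ[K] dd g) = (H.ιG g • f (H.ιG g⁻¹ • p)) ⊗ₜ[K] ψ g w :=
    fun f w p g => hL0 f w p g
  let Θbil : (P →ₗ[A] N) →ₗ[K] W →ₗ[K] ((P ⊗[K] MonoidAlgebra K G) →ₗ[B] (N ⊗[K] W)) :=
    LinearMap.mk₂' K K LB
      (fun f f' w => hext1 _ _ fun p => by
        simp only [hLB, LinearMap.add_apply, smul_add, add_tmul])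
      (fun k f w => hext1 _ _ fun p => by
        simp only [hLB, LinearMap.smul_apply]
        rw [hBKN, smul_tmul'])
      (fun f w w' => hext1 _ _ fun p => by
        simp only [hLB, map_add, tmul_add, LinearMap.add_apply])
      (fun k f w => hext1 _ _ fun p => by
        simp only [hLB, map_smul, tmul_smul, LinearMap.smul_apply])
  let Θ0 : ((P →ₗ[A] N) ⊗[K] W) →ₗ[K] ((P ⊗[K] MonoidAlgebra K G) →ₗ[B] (N ⊗[K] W)) :=
    TensorProduct.lift Θbil
  have hΘ0 : ∀ (f : P →ₗ[A] N) (w : W), Θ0 (f ⊗ₜ[K] w) = LB f w :=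
    fun f w => TensorProduct.lift.tmul f w
  have hcomp : ∀ (x : (P →ₗ[A] N) ⊗[K] W) (p : P),
      Θ0 x (p ⊗ₜ[K] dd 1) = e x p := by
    intro x p
    induction x using TensorProduct.induction_on with
    | zero => simp
    | tmul f w =>
        rw [hΘ0, hLB, he, inv_one, hι1, one_smul, one_smul, map_one ψ]
        rfl
    | add x y hx hy =>
        rw [map_add, map_add, LinearMap.add_apply, LinearMap.add_apply, hx, hy]
  have hinj : Function.Injective Θ0 := by
    intro x y hxy
    apply e.injective
    apply LinearMap.ext; intro p
    rw [← hcomp, ← hcomp, hxy]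
  have hsurj : Function.Surjective Θ0 := by
    intro Fb
    let f0 : P →ₗ[A] (N ⊗[K] W) :=
      { toFun := fun p => Fb (p ⊗ₜ[K] dd 1)
        map_add' := fun p q => by
          show Fb ((p + q) ⊗ₜ[K] dd 1) = Fb (p ⊗ₜ[K] dd 1) + Fb (q ⊗ₜ[K] dd 1)
          rw [add_tmul, map_add]
        map_smul' := fun a p => by
          show Fb ((a • p) ⊗ₜ[K] dd 1) = a • Fb (p ⊗ₜ[K] dd 1)
          rw [← hPA, ← hA1, map_smul, hANW'] }
    refine ⟨e.symm f0, hext1 _ _ fun p => ?_⟩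
    rw [hcomp, e.apply_symm_apply]
    rfl
  refine ⟨LinearEquiv.ofBijective Θ0 ⟨hinj, hsurj⟩, fun f w p g => ?_⟩
  show Θ0 (f ⊗ₜ[K] w) (p ⊗ₜ[K] dd g) = _
  rw [hΘ0, hLB]
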